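/- If Σ : [0,∞) → ℝ^{p×p} solves Σ̇ = c(t)c(t)ᵀ - k_T Σ + σI with Σ(0) symmetric positive definite, k_T > 0, σ > 0, then Σ(t) is symmetric and Σ(t) ⪰ (σ/k_T)(1 - e^{-k_T t})I for all t ≥ 0; in particular Σ(t) is positive definite for all t ≥ 0. -/

import Mathlib

open scoped Matrix

theorem stmt16 {p : ℕ} (kT σ : ℝ) (hkT : 0 < kT) (hσ : 0 < σ)
    (c : ℝ → EuclideanSpace ℝ (Fin p)) (hcont : Continuous c)
    (S : ℝ → Matrix (Fin p) (Fin p) ℝ)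
    (hS : ∀ t i j, HasDerivAt (fun s => S s i j)
      (c t i * c t j - kT * S t i j + σ * (1 : Matrix (Fin p) (Fin p) ℝ) i j) t)
    (hS0sym : (S 0).IsSymm) (hS0pd : (S 0).PosDef) :
    ∀ t, 0 ≤ t → (S t).IsSymm ∧
      (S t - ((σ / kT) * (1 - Real.exp (-kT * t))) • (1 : Matrix (Fin p) (Fin p) ℝ)).PosSemidef ∧
      (S t).PosDef := by
  have hexp : ∀ t : ℝ, HasDerivAt (fun s => Real.exp (kT * s)) (kT * Real.exp (kT * t)) t := by
    intro t
    have := (Real.hasDerivAt_exp (kT * t)).comp t ((hasDerivAt_id t).const_mul kT)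
    exact this.congr_deriv (by ring)
  -- symmetry
  have hsym : ∀ t i j, S t i j = S t j i := by
    intro t i j
    have hone : (1 : Matrix (Fin p) (Fin p) ℝ) i j = (1 : Matrix (Fin p) (Fin p) ℝ) j i := by
      simp [Matrix.one_apply, eq_comm]
    set d : ℝ → ℝ := fun s => Real.exp (kT * s) * (S s i j - S s j i) with hd
    have hderiv : ∀ s, HasDerivAt d 0 s := by
      intro s
      have h1 := (hS s i j).sub (hS s j i)
      have := (hexp s).mul h1
      refine this.congr_deriv ?_
      simp only [Pi.sub_apply]; rw [hone]; ring
    have hconst := is_const_of_deriv_eq_zero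
      (fun s => (hderiv s).differentiableAt) (fun s => (hderiv s).deriv) t 0
    have hd0 : d 0 = 0 := by simp [hd, hS0sym.apply]
    have : d t = 0 := hconst.trans hd0
    have hne : Real.exp (kT * t) ≠ 0 := (Real.exp_pos _).ne'
    have := mul_eq_zero.mp this
    rcases this with h | h
    · exact absurd h hne
    · linarith [sub_eq_zero.mp h]
  -- quadratic form estimate
  have key : ∀ (x : Fin p → ℝ) (t : ℝ), 0 ≤ t →
      Real.exp (-kT * t) * (x ⬝ᵥ (S 0 *ᵥ x)) +
        ((σ / kT) * (1 - Real.exp (-kT * t))) * (x ⬝ᵥ x) ≤ x ⬝ᵥ (S t *ᵥ x) := by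
    intro x t ht
    set n : ℝ := ∑ i, x i * x i with hn
    set q : ℝ → ℝ := fun s => ∑ i, ∑ j, x i * (S s i j * x j) with hq
    have hqd : ∀ s, x ⬝ᵥ (S s *ᵥ x) = q s := by
      intro s
      simp [hq, dotProduct, Matrix.mulVec, Finset.mul_sum, mul_assoc]
    have hxn : x ⬝ᵥ x = n := by simp [hn, dotProduct]
    have hq' : ∀ s, HasDerivAt q
        ((∑ i, x i * c s i)^2 - kT * q s + σ * n) s := by
      intro s
      have h0 : HasDerivAt q
          (∑ i, ∑ j, x i * ((c s i * c s j - kT * S s i j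
            + σ * (1 : Matrix (Fin p) (Fin p) ℝ) i j) * x j)) s := by
        apply HasDerivAt.fun_sum; intro i _
        apply HasDerivAt.fun_sum; intro j _
        exact ((hS s i j).mul_const (x j)).const_mul (x i)
      convert h0 using 1
      have h1 : (∑ i, x i * c s i)^2 = ∑ i, ∑ j, x i * (c s i * c s j * x j) := by
        rw [sq, Finset.sum_mul_sum]
        exact Finset.sum_congr rfl fun i _ => Finset.sum_congr rfl fun j _ => by ring
      have h2 : n = ∑ i, ∑ j, x i * ((1 : Matrix (Fin p) (Fin p) ℝ) i j * x j) := by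
        refine Finset.sum_congr rfl fun i _ => ?_
        simp [Matrix.one_apply, mul_ite, ite_mul]
      rw [h1, h2, hq]
      simp only [Finset.mul_sum]
      rw [← Finset.sum_sub_distrib, ← Finset.sum_add_distrib]
      refine Finset.sum_congr rfl fun i _ => ?_
      rw [← Finset.sum_sub_distrib, ← Finset.sum_add_distrib]
      refine Finset.sum_congr rfl fun j _ => ?_
      ring
    set g : ℝ → ℝ := fun s => Real.exp (kT * s) * q s
      - (σ / kT) * (Real.exp (kT * s) - 1) * n with hg
    have hg' : ∀ s, HasDerivAt g (Real.exp (kT * s) * (∑ i, x i * c s i)^2) s := by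
      intro s
      have h1 := (hexp s).mul (hq' s)
      have h2 := (((hexp s).sub_const 1).const_mul (σ / kT)).mul_const n
      have := h1.sub h2
      refine this.congr_deriv ?_
      field_simp
      ring
    have hmono : Monotone g :=
      monotone_of_deriv_nonneg (fun s => (hg' s).differentiableAt)
        (fun s => by rw [(hg' s).deriv]; positivity)
    have hle : g 0 ≤ g t := hmono ht
    have hg0 : g 0 = q 0 := by simp [hg]
    have hepos : (0:ℝ) < Real.exp (kT * t) := Real.exp_pos _
    have hinv : Real.exp (-kT * t) = (Real.exp (kT * t))⁻¹ := by
      rw [← Real.exp_neg]; ring_nf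
    have hle' : q 0 ≤ Real.exp (kT * t) * q t
        - σ / kT * (Real.exp (kT * t) - 1) * n := by
      have h := hle
      simp only [hg, mul_zero, Real.exp_zero, sub_self, zero_mul, mul_zero,
        sub_zero, one_mul] at h
      linarith [h]
    have hie : (Real.exp (kT * t))⁻¹ * Real.exp (kT * t) = 1 :=
      inv_mul_cancel₀ hepos.ne'
    have hmul := mul_le_mul_of_nonneg_left hle' (inv_nonneg.mpr hepos.le)
    have h2 : (Real.exp (kT * t))⁻¹ * (Real.exp (kT * t) * q t
        - σ / kT * (Real.exp (kT * t) - 1) * n)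
        = q t - σ / kT * (1 - (Real.exp (kT * t))⁻¹) * n := by
      field_simp
    rw [hqd, hqd, hxn, hinv]
    rw [h2] at hmul
    linarith
  -- assemble
  intro t ht
  have hSsym : (S t).IsSymm := Matrix.IsSymm.ext fun i j => hsym t j i
  have hSherm : (S t).IsHermitian := by
    rw [Matrix.IsHermitian, Matrix.conjTranspose_eq_transpose_of_trivial]
    exact hSsym
  have hfnonneg : 0 ≤ (σ / kT) * (1 - Real.exp (-kT * t)) := by
    have : Real.exp (-kT * t) ≤ 1 := by
      rw [Real.exp_le_one_iff]
      nlinarith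
    have hdiv : 0 ≤ σ / kT := le_of_lt (div_pos hσ hkT)
    nlinarith
  have hquad : ∀ x : Fin p → ℝ,
      x ⬝ᵥ ((S t - ((σ / kT) * (1 - Real.exp (-kT * t))) •
        (1 : Matrix (Fin p) (Fin p) ℝ)) *ᵥ x)
      = x ⬝ᵥ (S t *ᵥ x) - ((σ / kT) * (1 - Real.exp (-kT * t))) * (x ⬝ᵥ x) := by
    intro x
    rw [Matrix.sub_mulVec, dotProduct_sub, Matrix.smul_mulVec,
      Matrix.one_mulVec, dotProduct_smul, smul_eq_mul]
  have hS0quad : ∀ x : Fin p → ℝ, 0 ≤ x ⬝ᵥ (S 0 *ᵥ x) := by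
    intro x
    have := hS0pd.posSemidef.dotProduct_mulVec_nonneg x
    simpa using this
  refine ⟨hSsym, Matrix.posSemidef_iff_dotProduct_mulVec.mpr ⟨?_, ?_⟩,
    Matrix.posDef_iff_dotProduct_mulVec.mpr ⟨?_, ?_⟩⟩
  · rw [Matrix.IsHermitian, Matrix.conjTranspose_eq_transpose_of_trivial]
    apply Matrix.IsSymm.ext
    intro i j
    simp [Matrix.sub_apply, Matrix.one_apply, hsym t j i, eq_comm]
  · intro x
    have h1 := key x t ht
    have h2 := hS0quad x
    have h3 : (0:ℝ) < Real.exp (-kT * t) := Real.exp_pos _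
    rw [show star x = x from rfl, hquad x]
    nlinarith
  · exact hSherm
  · intro x hx
    have h1 := key x t ht
    have h2 : 0 < x ⬝ᵥ (S 0 *ᵥ x) := by
      have := hS0pd.dotProduct_mulVec_pos hx
      simpa using this
    have h3 : (0:ℝ) < Real.exp (-kT * t) := Real.exp_pos _
    have h4 : 0 ≤ x ⬝ᵥ x := Finset.sum_nonneg fun i _ => mul_self_nonneg (x i)
    rw [show star x = x from rfl]
    nlinarith
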